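/- Fix λ > 0 and let f(ε) = 8π²λ ∫_ε^2 s^{-4}(1 - s²/4)²(1 + s²/4) ds. Then f(ε) = (8π²λ/3)ε^{-3} - 2π²λ ε^{-1} + O(ε) as ε → 0⁺; in particular the constant term vanishes: lim_{ε→0⁺} (f(ε) - (8π²λ/3)ε^{-3} + 2π²λ ε^{-1}) = 0. -/

import Mathlib

open Real Filter MeasureTheory intervalIntegral Asymptotics

lemma rv_integral_eval {ε : ℝ} (hε : 0 < ε) :
    (∫ s in ε..2, (s ^ 4)⁻¹ * (1 - s ^ 2 / 4) ^ 2 * (1 + s ^ 2 / 4))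
      = (ε ^ 3)⁻¹ / 3 - ε⁻¹ / 4 + ε / 16 - ε ^ 3 / 192 := by
  have hne : ∀ s ∈ Set.uIcc ε 2, s ≠ 0 := by
    intro s hs
    rcases Set.mem_uIcc.mp hs with h | h
    · nlinarith [h.1]
    · nlinarith [h.1]
  have h : ∀ s ∈ Set.uIcc ε 2,
      HasDerivAt (fun x : ℝ => -(x ^ 3)⁻¹ / 3 + x⁻¹ / 4 - x / 16 + x ^ 3 / 192)
        ((s ^ 4)⁻¹ * (1 - s ^ 2 / 4) ^ 2 * (1 + s ^ 2 / 4)) s := by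
    intro s hs
    have hs0 : s ≠ 0 := hne s hs
    have h1 : HasDerivAt (fun x : ℝ => x ^ 3) (3 * s ^ 2) s := by
      simpa using hasDerivAt_pow 3 s
    have h2 : HasDerivAt (fun x : ℝ => (x ^ 3)⁻¹) (-(3 * s ^ 2) / (s ^ 3) ^ 2) s :=
      h1.inv (pow_ne_zero _ hs0)
    have h3 : HasDerivAt (fun x : ℝ => x⁻¹) (-(s ^ 2)⁻¹) s := by
      simpa using hasDerivAt_inv hs0
    have := (((h2.neg.div_const 3).add (h3.div_const 4)).sub
      ((hasDerivAt_id s).div_const 16)).add (h1.div_const 192)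
    refine this.congr_deriv ?_
    field_simp
    ring
  have hint : IntervalIntegrable
      (fun s : ℝ => (s ^ 4)⁻¹ * (1 - s ^ 2 / 4) ^ 2 * (1 + s ^ 2 / 4)) volume ε 2 := by
    apply ContinuousOn.intervalIntegrable
    exact (((continuousOn_pow 4).inv₀ fun s hs => pow_ne_zero _ (hne s hs)).mul
      (by fun_prop)).mul (by fun_prop)
  rw [intervalIntegral.integral_eq_sub_of_hasDerivAt h hint]
  have h2 : (2 : ℝ) ≠ 0 := by norm_num
  field_simp
  ring

/-- Renormalized volume of the hyperbolic manifold `S¹(λ) × ℝ³`: for fixed `λ > 0`,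
`f(ε) = 8π²λ ∫_ε^2 s⁻⁴ (1 - s²/4)² (1 + s²/4) ds = (8π²λ/3)ε⁻³ - 2π²λ ε⁻¹ + O(ε)`;
in particular the constant term (the renormalized volume) vanishes. -/
theorem renormalized_volume_S1_times_R3 (lam : ℝ) (hlam : 0 < lam) :
    ((fun ε : ℝ =>
        (8 * π ^ 2 * lam * ∫ s in ε..2, (s ^ 4)⁻¹ * (1 - s ^ 2 / 4) ^ 2 * (1 + s ^ 2 / 4))
        - (8 * π ^ 2 * lam / 3) * (ε ^ 3)⁻¹ + 2 * π ^ 2 * lam * ε⁻¹)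
      =O[nhdsWithin 0 (Set.Ioi 0)] (fun ε : ℝ => ε)) ∧
    Tendsto (fun ε : ℝ =>
        (8 * π ^ 2 * lam * ∫ s in ε..2, (s ^ 4)⁻¹ * (1 - s ^ 2 / 4) ^ 2 * (1 + s ^ 2 / 4))
        - (8 * π ^ 2 * lam / 3) * (ε ^ 3)⁻¹ + 2 * π ^ 2 * lam * ε⁻¹)
      (nhdsWithin 0 (Set.Ioi 0)) (nhds 0) := by
  have heq : ∀ ε ∈ Set.Ioi (0 : ℝ),
      (8 * π ^ 2 * lam * ∫ s in ε..2, (s ^ 4)⁻¹ * (1 - s ^ 2 / 4) ^ 2 * (1 + s ^ 2 / 4))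
        - (8 * π ^ 2 * lam / 3) * (ε ^ 3)⁻¹ + 2 * π ^ 2 * lam * ε⁻¹
      = π ^ 2 * lam / 2 * ε - π ^ 2 * lam / 24 * ε ^ 3 := by
    intro ε hε
    rw [rv_integral_eval hε]
    ring
  have hev : (fun ε : ℝ =>
        (8 * π ^ 2 * lam * ∫ s in ε..2, (s ^ 4)⁻¹ * (1 - s ^ 2 / 4) ^ 2 * (1 + s ^ 2 / 4))
        - (8 * π ^ 2 * lam / 3) * (ε ^ 3)⁻¹ + 2 * π ^ 2 * lam * ε⁻¹)
      =ᶠ[nhdsWithin 0 (Set.Ioi 0)] (fun ε : ℝ => π ^ 2 * lam / 2 * ε - π ^ 2 * lam / 24 * ε ^ 3) :=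
    eventually_nhdsWithin_of_forall heq
  constructor
  · refine IsBigO.congr' ?_ hev.symm EventuallyEq.rfl
    have h1 : (fun ε : ℝ => π ^ 2 * lam / 2 * ε) =O[nhdsWithin 0 (Set.Ioi 0)] (fun ε : ℝ => ε) :=
      (isBigO_refl (fun ε : ℝ => ε) _).const_mul_left _
    have h2 : (fun ε : ℝ => π ^ 2 * lam / 24 * ε ^ 3)
        =O[nhdsWithin 0 (Set.Ioi 0)] (fun ε : ℝ => ε) := by
      have hsq : (fun ε : ℝ => ε ^ 2) =O[nhdsWithin 0 (Set.Ioi 0)] (fun _ : ℝ => (1 : ℝ)) := by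
        apply Filter.Tendsto.isBigO_one
        have : Tendsto (fun ε : ℝ => ε ^ 2) (nhds (0 : ℝ)) (nhds 0) := by
          simpa using (continuous_pow 2).tendsto (0 : ℝ)
        exact this.mono_left nhdsWithin_le_nhds
      have := hsq.mul (isBigO_refl (fun ε : ℝ => ε) (nhdsWithin 0 (Set.Ioi 0)))
      have h3 : (fun ε : ℝ => ε ^ 3) =O[nhdsWithin 0 (Set.Ioi 0)] (fun ε : ℝ => ε) := by
        simpa [pow_succ, mul_comm, mul_assoc, one_mul] using this
      exact h3.const_mul_left _
    exact h1.sub h2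
  · apply Tendsto.congr' hev.symm
    have : Tendsto (fun ε : ℝ => π ^ 2 * lam / 2 * ε - π ^ 2 * lam / 24 * ε ^ 3)
        (nhds 0) (nhds 0) := by
      have := (Continuous.tendsto (by fun_prop :
        Continuous fun ε : ℝ => π ^ 2 * lam / 2 * ε - π ^ 2 * lam / 24 * ε ^ 3) 0)
      simpa using this
    exact this.mono_left nhdsWithin_le_nhds
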